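/- For every integer d ≥ 3 and every integer n with 1 ≤ n < (2.6·d)^d, one has n·ln d ≤ π·√(2/3)·d^{ln d}·n^{1−1/d}; consequently p_d(n) ≤ exp( π·√(2/3)·d^{ln d}·n^{1−1/d} ). -/

import Mathlib

open Finset

noncomputable instance myLexLO (d : ℕ) : LinearOrder (Lex (Fin d → ℕ)) :=
  @Pi.Lex.linearOrder (Fin d) _ _ (Finite.to_wellFoundedLT) _

variable {d : ℕ}

noncomputable def lexMax (Q : Finset (Fin d → ℕ)) (hQ : Q.Nonempty) : Fin d → ℕ :=
  ofLex ((Q.image (toLex : (Fin d → ℕ) → Lex (Fin d → ℕ))).max' (hQ.image _))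

lemma lexMax_mem (Q : Finset (Fin d → ℕ)) (hQ : Q.Nonempty) : lexMax Q hQ ∈ Q := by
  have h := (Q.image (toLex : (Fin d → ℕ) → Lex (Fin d → ℕ))).max'_mem (hQ.image _)
  obtain ⟨a, ha, hae⟩ := Finset.mem_image.mp h
  show ofLex _ ∈ Q
  rw [← hae]
  exact ha

lemma le_lexMax (Q : Finset (Fin d → ℕ)) (hQ : Q.Nonempty) {x : Fin d → ℕ} (hx : x ∈ Q) :
    toLex x ≤ toLex (lexMax Q hQ) := by
  have h := (Q.image (toLex : (Fin d → ℕ) → Lex (Fin d → ℕ))).le_max'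
    (toLex x) (mem_image_of_mem _ hx)
  simpa [lexMax] using h

lemma lex_lt_iff {x y : Fin d → ℕ} :
    toLex x < toLex y ↔ ∃ i, (∀ j, j < i → x j = y j) ∧ x i < y i := Iff.rfl

lemma toLex_mono' {x y : Fin d → ℕ} (h : x ≤ y) : toLex x ≤ toLex y := by
  rcases eq_or_ne x y with rfl | hne
  · exact le_refl _
  · refine le_of_lt (lex_lt_iff.mpr ?_)
    have hne' : (Finset.univ.filter (fun i => x i ≠ y i)).Nonempty := by
      obtain ⟨i, hi⟩ := Function.ne_iff.mp hne
      exact ⟨i, by simp [hi]⟩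
    set i := (Finset.univ.filter (fun i => x i ≠ y i)).min' hne' with hidef
    have himem := (Finset.univ.filter (fun i => x i ≠ y i)).min'_mem hne'
    refine ⟨i, fun j hj => ?_, lt_of_le_of_ne (h i) ?_⟩
    · by_contra hne2
      have hc : i ≤ j := Finset.min'_le _ j (by simp [hne2])
      exact absurd hj (not_lt.mpr hc)
    · simpa using himem

/-- total version of lexMax -/
noncomputable def lexMax' (Q : Finset (Fin d → ℕ)) : Fin d → ℕ :=
  if h : Q.Nonempty then lexMax Q h else fun _ => 0

lemma lexMax'_mem {Q : Finset (Fin d → ℕ)} (hQ : Q.Nonempty) : lexMax' Q ∈ Q := by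
  rw [lexMax', dif_pos hQ]; exact lexMax_mem Q hQ

lemma le_lexMax' {Q : Finset (Fin d → ℕ)} (hQ : Q.Nonempty) {x : Fin d → ℕ} (hx : x ∈ Q) :
    toLex x ≤ toLex (lexMax' Q) := by
  rw [lexMax', dif_pos hQ]; exact le_lexMax Q hQ hx

lemma isLowerSet_erase {Q : Finset (Fin d → ℕ)} (hl : IsLowerSet (↑Q : Set (Fin d → ℕ)))
    (hQ : Q.Nonempty) : IsLowerSet (↑(Q.erase (lexMax' Q)) : Set (Fin d → ℕ)) := by
  intro x y hyx hx
  simp only [Finset.coe_erase, Set.mem_diff, Finset.mem_coe, Set.mem_singleton_iff] at hx ⊢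
  have hyQ : y ∈ Q := hl hyx hx.1
  refine ⟨hyQ, fun hye => ?_⟩
  subst hye
  have h1 : toLex x ≤ toLex (lexMax' Q) := le_lexMax' hQ hx.1
  have h2 : toLex (lexMax' Q) ≤ toLex x := toLex_mono' hyx
  exact hx.2 (toLex.injective (le_antisymm h1 h2))

/-- the index recorded in the encoding -/
noncomputable def jIdx (Q : Finset (Fin d → ℕ)) : ℕ :=
  if h : (Finset.univ.filter
      (fun i => lexMax' Q i ≠ lexMax' (Q.erase (lexMax' Q)) i)).Nonempty
  then ((Finset.univ.filter
      (fun i => lexMax' Q i ≠ lexMax' (Q.erase (lexMax' Q)) i)).min' h : Fin d).val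
  else 0

/-- reconstruct the deleted maximum from the remaining set and the index -/
noncomputable def rebuild (Q' : Finset (Fin d → ℕ)) (j : ℕ) : Fin d → ℕ :=
  fun i => if (i : ℕ) < j then lexMax' Q' i else if (i : ℕ) = j then lexMax' Q' i + 1 else 0

lemma main_step {Q : Finset (Fin d → ℕ)} (hl : IsLowerSet (↑Q : Set (Fin d → ℕ)))
    (h2 : 2 ≤ Q.card) :
    jIdx Q < d ∧ lexMax' Q = rebuild (Q.erase (lexMax' Q)) (jIdx Q) := by
  have hQ : Q.Nonempty := Finset.card_pos.mp (by omega)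
  set M := lexMax' Q with hMdef
  have hM : M ∈ Q := lexMax'_mem hQ
  have hQ' : (Q.erase M).Nonempty := by
    rw [← Finset.card_pos, Finset.card_erase_of_mem hM]; omega
  set M' := lexMax' (Q.erase M) with hM'def
  have hM'e : M' ∈ Q.erase M := lexMax'_mem hQ'
  have hM'Q : M' ∈ Q := Finset.mem_of_mem_erase hM'e
  have hM'ne : M' ≠ M := Finset.ne_of_mem_erase hM'e
  have hlt : toLex M' < toLex M :=
    lt_of_le_of_ne (le_lexMax' hQ hM'Q) (fun h => hM'ne (toLex.injective h))
  obtain ⟨i, hpre, hilt⟩ := lex_lt_iff.mp hlt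
  have hDne : (Finset.univ.filter (fun k => M k ≠ M' k)).Nonempty :=
    ⟨i, by simp [hilt.ne']⟩
  set j := (Finset.univ.filter (fun k => M k ≠ M' k)).min' hDne with hjdef
  have hjmem : M j ≠ M' j := by
    have := (Finset.univ.filter (fun k => M k ≠ M' k)).min'_mem hDne
    simpa using this
  have hij : i = j := by
    have hji : j ≤ i := Finset.min'_le _ i (by simp [hilt.ne'])
    rcases lt_or_eq_of_le hji with hlt2 | heq
    · exact absurd (hpre j hlt2).symm hjmem
    · exact heq.symm
  have hjlt : M' j < M j := hij ▸ hilt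
  have hprefix : ∀ k, k < j → M k = M' k := fun k hk => (hpre k (hij ▸ hk)).symm
  have hsub : ∀ k : Fin d, M k ≠ 0 → Function.update M k (M k - 1) ∈ Q.erase M := by
    intro k hk
    have hle : Function.update M k (M k - 1) ≤ M := by
      intro l
      rcases eq_or_ne l k with rfl | hlk
      · simp [Function.update_self]
      · simp [Function.update_of_ne hlk]
    have hmem : Function.update M k (M k - 1) ∈ Q := hl hle hM
    refine Finset.mem_erase.mpr ⟨?_, hmem⟩
    intro hEq
    have := congrFun hEq k
    rw [Function.update_self] at this
    omega
  have hjsucc : M j = M' j + 1 := by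
    have hMj : M j ≠ 0 := by omega
    have hmem := hsub j hMj
    have hle' : toLex (Function.update M j (M j - 1)) ≤ toLex M' := le_lexMax' hQ' hmem
    by_contra hne
    have hMj1 : M' j < M j - 1 := by omega
    have hlt3 : toLex M' < toLex (Function.update M j (M j - 1)) := by
      refine lex_lt_iff.mpr ⟨j, fun l hli => ?_, ?_⟩
      · rw [Function.update_of_ne (ne_of_lt hli), ← hprefix l hli]
      · rwa [Function.update_self]
    exact absurd hle' (not_le.mpr hlt3)
  have hzero : ∀ k : Fin d, j < k → M k = 0 := by
    intro k hik
    by_contra hk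
    have hmem := hsub k hk
    have hle' : toLex (Function.update M k (M k - 1)) ≤ toLex M' := le_lexMax' hQ' hmem
    have hlt3 : toLex M' < toLex (Function.update M k (M k - 1)) := by
      refine lex_lt_iff.mpr ⟨j, fun l hli => ?_, ?_⟩
      · rw [Function.update_of_ne (ne_of_lt (hli.trans hik)), ← hprefix l hli]
      · rwa [Function.update_of_ne (ne_of_lt hik)]
    exact absurd hle' (not_le.mpr hlt3)
  have hjIdx : jIdx Q = (j : ℕ) := by
    rw [jIdx, ← hMdef, ← hM'def, dif_pos hDne]
  constructor
  · rw [hjIdx]; exact j.isLt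
  · funext l
    rw [rebuild, hjIdx, ← hM'def]
    rcases lt_trichotomy (l : ℕ) (j : ℕ) with hli | hli | hli
    · rw [if_pos hli]
      exact hprefix l (by exact_mod_cast hli)
    · have hlj : l = j := Fin.ext hli
      subst hlj
      rw [if_neg (lt_irrefl _), if_pos rfl]
      exact hjsucc
    · rw [if_neg (by omega), if_neg (by omega)]
      exact hzero l (by exact_mod_cast hli)

lemma sub_aux {T : Type} (h : Subsingleton T) : Finite T ∧ Nat.card T ≤ 1 := by
  haveI := h
  refine ⟨Finite.of_subsingleton, ?_⟩
  have h1 : Nat.card T ≤ Nat.card PUnit.{1} :=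
    Nat.card_le_card_of_injective (fun _ => PUnit.unit.{1}) (fun a b _ => Subsingleton.elim a b)
  simpa using h1

lemma card_one_eq {Q : Finset (Fin d → ℕ)} (hl : IsLowerSet (↑Q : Set (Fin d → ℕ)))
    (hc : Q.card = 1) : Q = {fun _ => 0} := by
  obtain ⟨x, hx⟩ := Finset.card_eq_one.mp hc
  subst hx
  have h0 : (fun _ => 0 : Fin d → ℕ) ∈ ({x} : Finset (Fin d → ℕ)) := by
    have := hl (a := x) (b := fun _ => 0) (fun i => Nat.zero_le _)
      (by simp)
    simpa using this
  rw [Finset.mem_singleton.mp h0]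

lemma lower_finite_card (hd : 0 < d) (n : ℕ) :
    Finite {Q : Finset (Fin d → ℕ) // IsLowerSet (↑Q : Set (Fin d → ℕ)) ∧ Q.card = n} ∧
    Nat.card {Q : Finset (Fin d → ℕ) // IsLowerSet (↑Q : Set (Fin d → ℕ)) ∧ Q.card = n}
      ≤ d ^ n := by
  induction n with
  | zero =>
    have hs : Subsingleton
        {Q : Finset (Fin d → ℕ) // IsLowerSet (↑Q : Set (Fin d → ℕ)) ∧ Q.card = 0} := by
      constructor
      rintro ⟨Q1, _, c1⟩ ⟨Q2, _, c2⟩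
      apply Subtype.ext
      simp only
      rw [Finset.card_eq_zero.mp c1, Finset.card_eq_zero.mp c2]
    obtain ⟨h1, h2⟩ := sub_aux hs
    exact ⟨h1, by simpa using h2⟩
  | succ m ih =>
    match m, ih with
    | 0, _ =>
      have hs : Subsingleton
          {Q : Finset (Fin d → ℕ) // IsLowerSet (↑Q : Set (Fin d → ℕ)) ∧ Q.card = 1} := by
        constructor
        rintro ⟨Q1, l1, c1⟩ ⟨Q2, l2, c2⟩
        apply Subtype.ext
        simp only
        rw [card_one_eq l1 c1, card_one_eq l2 c2]
      obtain ⟨h1, h2⟩ := sub_aux hs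
      refine ⟨h1, le_trans (by simpa using h2) ?_⟩
      rw [zero_add, pow_one]; exact hd
    | (m + 1), ih =>
      obtain ⟨ihF, ihC⟩ := ih
      haveI := ihF
      set S1 := {Q : Finset (Fin d → ℕ) // IsLowerSet (↑Q : Set (Fin d → ℕ)) ∧ Q.card = m + 1}
        with hS1
      have key : ∀ Q : Finset (Fin d → ℕ), IsLowerSet (↑Q : Set (Fin d → ℕ)) →
          Q.card = m + 1 + 1 →
          (Q.Nonempty ∧ jIdx Q < d ∧
            IsLowerSet (↑(Q.erase (lexMax' Q)) : Set (Fin d → ℕ)) ∧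
            (Q.erase (lexMax' Q)).card = m + 1 ∧
            lexMax' Q = rebuild (Q.erase (lexMax' Q)) (jIdx Q)) := by
        intro Q hl hc
        have hQ : Q.Nonempty := Finset.card_pos.mp (by omega)
        obtain ⟨hj, hreb⟩ := main_step hl (by omega)
        exact ⟨hQ, hj, isLowerSet_erase hl hQ,
          by rw [Finset.card_erase_of_mem (lexMax'_mem hQ), hc]; omega, hreb⟩
      let F : {Q : Finset (Fin d → ℕ) // IsLowerSet (↑Q : Set (Fin d → ℕ)) ∧
          Q.card = m + 1 + 1} → Fin d × S1 :=
        fun p => (⟨jIdx p.1, (key p.1 p.2.1 p.2.2).2.1⟩,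
          ⟨p.1.erase (lexMax' p.1), (key p.1 p.2.1 p.2.2).2.2.1,
            (key p.1 p.2.1 p.2.2).2.2.2.1⟩)
      have hFinj : Function.Injective F := by
        rintro p q hpq
        obtain ⟨h1, h2⟩ := Prod.mk.injEq .. ▸ hpq
        have hj : jIdx p.1 = jIdx q.1 := by
          have := congrArg Fin.val h1
          simpa using this
        have he : p.1.erase (lexMax' p.1) = q.1.erase (lexMax' q.1) :=
          congrArg Subtype.val h2
        have hM : lexMax' p.1 = lexMax' q.1 := by
          rw [(key p.1 p.2.1 p.2.2).2.2.2.2, (key q.1 q.2.1 q.2.2).2.2.2.2, he, hj]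
        apply Subtype.ext
        rw [← Finset.insert_erase (lexMax'_mem (key p.1 p.2.1 p.2.2).1),
          ← Finset.insert_erase (lexMax'_mem (key q.1 q.2.1 q.2.2).1), he, hM]
      haveI hfin2 : Finite (Fin d × S1) := inferInstance
      refine ⟨Finite.of_injective F hFinj, ?_⟩
      calc Nat.card _ ≤ Nat.card (Fin d × S1) := Nat.card_le_card_of_injective F hFinj
        _ = d * Nat.card S1 := by simp [Nat.card_prod]
        _ ≤ d * d ^ (m + 1) := Nat.mul_le_mul_left d ihC
        _ = d ^ (m + 1 + 1) := by ring

lemma log_three_bounds : (1.09861 : ℝ) ≤ Real.log 3 ∧ Real.log 3 ≤ 1.098613 := by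
  have h := Real.abs_log_sub_add_sum_range_le (x := (1/3 : ℝ))
    (by rw [abs_of_nonneg (by norm_num : (0:ℝ) ≤ 1/3)]; norm_num) 14
  rw [abs_of_nonneg (by norm_num : (0:ℝ) ≤ 1/3)] at h
  have h23 : (1 - 1/3 : ℝ) = 2/3 := by norm_num
  rw [h23, Real.log_div (by norm_num) (by norm_num)] at h
  rw [abs_le] at h
  obtain ⟨h1, h2⟩ := h
  simp only [Finset.sum_range_succ, Finset.sum_range_zero] at h1 h2
  norm_num at h1 h2
  constructor
  · nlinarith [Real.log_two_gt_d9, Real.log_two_lt_d9]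
  · nlinarith [Real.log_two_gt_d9, Real.log_two_lt_d9]

lemma sqrt_lb : (0.8164965 : ℝ) ≤ Real.sqrt (2/3) := by
  rw [show (0.8164965 : ℝ) = Real.sqrt (0.8164965^2) by
    rw [Real.sqrt_sq (by norm_num)]]
  exact Real.sqrt_le_sqrt (by norm_num)

lemma C_lb : (2.565087 : ℝ) ≤ Real.pi * Real.sqrt (2/3) := by
  have hπ : (3.141592 : ℝ) ≤ Real.pi := Real.pi_gt_d6.le
  nlinarith [sqrt_lb, Real.sqrt_nonneg (2/3 : ℝ)]

lemma exp_taylor_lb {x : ℝ} (hx : 0 ≤ x) : (1 + x/64)^(64:ℕ) ≤ Real.exp x := by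
  have h1 : Real.exp x = (Real.exp (x/64))^(64:ℕ) := by
    rw [← Real.exp_nat_mul]; congr 1; push_cast; ring
  rw [h1]
  exact pow_le_pow_left₀ (by positivity) (by linarith [Real.add_one_le_exp (x/64)]) 64

lemma exp_lb : (3.3421 : ℝ) ≤ Real.exp (Real.log 3 * Real.log 3) := by
  have hL := log_three_bounds.1
  have hLL : (1.2069439321 : ℝ) ≤ Real.log 3 * Real.log 3 := by nlinarith
  have h1 : Real.exp (1.2069439321 : ℝ) ≤ Real.exp (Real.log 3 * Real.log 3) :=
    Real.exp_le_exp.mpr hLL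
  have h2 : Real.exp (1.2069439321 : ℝ) = Real.exp 1 * Real.exp 0.2069439321 := by
    rw [← Real.exp_add]; norm_num
  have h3 : ((1 : ℝ) + 0.2069439321/64)^(64:ℕ) ≤ Real.exp 0.2069439321 :=
    exp_taylor_lb (by norm_num)
  have h4 : (2.7182818283 : ℝ) ≤ Real.exp 1 := Real.exp_one_gt_d9.le
  have h5 : (3.3421 : ℝ) ≤ 2.7182818283 * ((1 : ℝ) + 0.2069439321/64)^(64:ℕ) := by
    norm_num
  calc (3.3421 : ℝ) ≤ 2.7182818283 * ((1 : ℝ) + 0.2069439321/64)^(64:ℕ) := h5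
    _ ≤ Real.exp 1 * Real.exp 0.2069439321 := by
        have := Real.exp_pos (0.2069439321 : ℝ)
        nlinarith
    _ = Real.exp (1.2069439321 : ℝ) := h2.symm
    _ ≤ _ := h1

lemma numeric_key (d : ℕ) (hd : 3 ≤ d) :
    2.6 * (d:ℝ) * Real.log d ≤ Real.pi * Real.sqrt (2/3) * (d:ℝ) ^ Real.log d := by
  have hd0 : (0:ℝ) < d := by
    have : (0:ℕ) < d := by omega
    exact_mod_cast this
  rw [Real.rpow_def_of_pos hd0]
  rcases hd.eq_or_lt with rfl | hd4
  · have hc : ((3:ℕ):ℝ) = (3:ℝ) := by norm_num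
    rw [hc]
    have h1 := log_three_bounds.1
    have h2 := log_three_bounds.2
    have h3 := C_lb
    have h4 := exp_lb
    have h5 : (2.565087:ℝ) * 3.3421 ≤
        Real.pi * Real.sqrt (2/3) * Real.exp (Real.log 3 * Real.log 3) :=
      mul_le_mul h3 h4 (by norm_num) (le_trans (by norm_num) h3)
    nlinarith
  · -- d ≥ 4
    have hd4' : (4:ℝ) ≤ (d:ℝ) := by exact_mod_cast hd4
    set t := Real.log d with ht
    have ht4 : Real.log 4 ≤ t := Real.log_le_log (by norm_num) hd4'
    have hlog4 : (1.3862943606 : ℝ) ≤ Real.log 4 := by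
      rw [show (4:ℝ) = 2^(2:ℕ) by norm_num, Real.log_pow]
      have := Real.log_two_gt_d9
      push_cast
      nlinarith
    have ht' : (1.386 : ℝ) ≤ t := by linarith
    have hdexp : (d:ℝ) = Real.exp t := (Real.exp_log hd0).symm
    rw [show t * t = t + (t * t - t) by ring, Real.exp_add, hdexp]
    have hE : (0:ℝ) < Real.exp t := Real.exp_pos t
    have hkey : 2.6 * t ≤ Real.pi * Real.sqrt (2/3) * Real.exp (t * t - t) := by
      have h1 : 1 + (t * t - t) ≤ Real.exp (t * t - t) := by
        have := Real.add_one_le_exp (t * t - t)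
        linarith
      have h2 : (0:ℝ) ≤ 1 + (t * t - t) := by nlinarith
      have h3 : (2.5:ℝ) ≤ Real.pi * Real.sqrt (2/3) := by linarith [C_lb]
      have h4 : 2.6 * t ≤ 2.5 * (1 + (t * t - t)) := by nlinarith [sq_nonneg (t - 1.386)]
      calc 2.6 * t ≤ 2.5 * (1 + (t * t - t)) := h4
        _ ≤ (Real.pi * Real.sqrt (2/3)) * (1 + (t * t - t)) := by nlinarith
        _ ≤ (Real.pi * Real.sqrt (2/3)) * Real.exp (t * t - t) := by nlinarith
    calc 2.6 * Real.exp t * t = Real.exp t * (2.6 * t) := by ring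
      _ ≤ Real.exp t * (Real.pi * Real.sqrt (2/3) * Real.exp (t * t - t)) := by
          exact mul_le_mul_of_nonneg_left hkey hE.le
      _ = Real.pi * Real.sqrt (2/3) * (Real.exp t * Real.exp (t * t - t)) := by ring

/-- `lowerCount d n` is the number of lower sets `Q ⊆ ℕ^d` with exactly `n` elements. -/
noncomputable def lowerCount (d n : ℕ) : ℕ :=
  Nat.card {Q : Finset (Fin d → ℕ) // IsLowerSet (↑Q : Set (Fin d → ℕ)) ∧ Q.card = n}

theorem stmt_12 (d n : ℕ) (hd : 3 ≤ d) (hn : 1 ≤ n) (h : (n : ℝ) < (2.6 * (d : ℝ)) ^ d) :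
    (n : ℝ) * Real.log d ≤
        Real.pi * Real.sqrt (2 / 3) * (d : ℝ) ^ Real.log d * (n : ℝ) ^ (1 - 1 / (d : ℝ)) ∧
      (lowerCount d n : ℝ) ≤
        Real.exp (Real.pi * Real.sqrt (2 / 3) * (d : ℝ) ^ Real.log d *
          (n : ℝ) ^ (1 - 1 / (d : ℝ))) := by
  have hd0 : (0:ℝ) < d := by exact_mod_cast (by omega : 0 < d)
  have hn0 : (0:ℝ) < n := by exact_mod_cast hn
  have hlogd0 : 0 ≤ Real.log d := Real.log_nonneg (by exact_mod_cast (by omega : 1 ≤ d))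
  have hroot : (n:ℝ) ^ ((1:ℝ)/d) ≤ 2.6 * d := by
    have h1 : (n:ℝ) ^ ((1:ℝ)/d) ≤ ((2.6*(d:ℝ))^(d:ℕ)) ^ ((1:ℝ)/d) :=
      Real.rpow_le_rpow hn0.le h.le (by positivity)
    have h2 : (((2.6*(d:ℝ))^(d:ℕ)) : ℝ) ^ ((1:ℝ)/d) = 2.6 * d := by
      rw [← Real.rpow_natCast (2.6*(d:ℝ)) d, ← Real.rpow_mul (by positivity)]
      rw [mul_one_div, div_self (by exact_mod_cast (by omega : d ≠ 0) : (d:ℝ) ≠ 0),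
        Real.rpow_one]
    rwa [h2] at h1
  have hkey : (n:ℝ) ^ ((1:ℝ)/d) * Real.log d ≤
      Real.pi * Real.sqrt (2/3) * (d:ℝ) ^ Real.log d := by
    calc (n:ℝ) ^ ((1:ℝ)/d) * Real.log d ≤ (2.6 * d) * Real.log d :=
        mul_le_mul_of_nonneg_right hroot hlogd0
      _ = 2.6 * (d:ℝ) * Real.log d := by ring
      _ ≤ _ := numeric_key d hd
  have part1 : (n:ℝ) * Real.log d ≤
      Real.pi * Real.sqrt (2/3) * (d:ℝ) ^ Real.log d * (n:ℝ) ^ (1 - 1/(d:ℝ)) := by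
    have hsplit : (n:ℝ) = (n:ℝ) ^ ((1:ℝ)/d) * (n:ℝ) ^ (1 - 1/(d:ℝ)) := by
      rw [← Real.rpow_add hn0]
      rw [show (1:ℝ)/d + (1 - 1/(d:ℝ)) = 1 by ring, Real.rpow_one]
    calc (n:ℝ) * Real.log d
        = ((n:ℝ) ^ ((1:ℝ)/d) * Real.log d) * (n:ℝ) ^ (1 - 1/(d:ℝ)) := by
          nth_rewrite 1 [hsplit]; ring
      _ ≤ (Real.pi * Real.sqrt (2/3) * (d:ℝ) ^ Real.log d) * (n:ℝ) ^ (1 - 1/(d:ℝ)) :=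
          mul_le_mul_of_nonneg_right hkey (Real.rpow_nonneg hn0.le _)
  refine ⟨part1, ?_⟩
  have h2 := (lower_finite_card (show 0 < d by omega) n).2
  have h3 : lowerCount d n ≤ d ^ n := h2
  have hcount : (lowerCount d n : ℝ) ≤ ((d ^ n : ℕ) : ℝ) := by exact_mod_cast h3
  have hdn : ((d ^ n : ℕ) : ℝ) = Real.exp ((n:ℝ) * Real.log d) := by
    push_cast
    rw [Real.exp_nat_mul, Real.exp_log hd0]
  calc (lowerCount d n : ℝ) ≤ ((d^n : ℕ):ℝ) := hcount
    _ = Real.exp ((n:ℝ) * Real.log d) := hdn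
    _ ≤ _ := Real.exp_le_exp.mpr part1
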